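/- For any μ > 0, the double integral over (t₁,t₂) ∈ ℝ² of μ/(π |t₂(t₁+i) + μ - i(t₁+i)|²) dt₁ dt₂ is at most πμ. In particular, it is O(μ). -/

import Mathlib

open Real MeasureTheory

lemma aux_int (c : ℝ) (hc : 0 < c) : (∫ x : ℝ, (x ^ 2 + c ^ 2)⁻¹) = π / c := by
  have h := MeasureTheory.Measure.integral_comp_mul_left (fun y : ℝ => (1 + y ^ 2)⁻¹) c⁻¹
  rw [integral_univ_inv_one_add_sq] at h
  have h2 : ∀ x : ℝ, (1 + (c⁻¹ * x) ^ 2)⁻¹ = c ^ 2 * (x ^ 2 + c ^ 2)⁻¹ := by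
    intro x
    have h3 : (0:ℝ) < x ^ 2 + c ^ 2 := by positivity
    have h4 : (0:ℝ) < 1 + (c⁻¹ * x) ^ 2 := by positivity
    field_simp
    ring
  simp_rw [h2] at h
  rw [MeasureTheory.integral_const_mul, inv_inv, abs_of_pos hc, smul_eq_mul] at h
  rw [eq_div_iff hc.ne']
  have h' : c * ((∫ x : ℝ, (x ^ 2 + c ^ 2)⁻¹) * c) = c * π := by linear_combination h
  exact mul_left_cancel₀ hc.ne' h'

lemma aux_int_shift (p c : ℝ) (hc : 0 < c) :
    (∫ x : ℝ, ((x + p) ^ 2 + c ^ 2)⁻¹) = π / c := by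
  rw [MeasureTheory.integral_add_right_eq_self (fun x : ℝ => (x ^ 2 + c ^ 2)⁻¹) p]
  exact aux_int c hc

theorem stmt_1 (μ : ℝ) (hμ : 0 < μ) :
    (∫ t₁ : ℝ, ∫ t₂ : ℝ,
      μ / (π * ‖(t₂ : ℂ) * (t₁ + Complex.I) + μ
        - Complex.I * (t₁ + Complex.I)‖ ^ 2)) ≤ π * μ := by
  have key : ∀ t₁ : ℝ, (∫ t₂ : ℝ,
      μ / (π * ‖(t₂ : ℂ) * (t₁ + Complex.I) + μ
        - Complex.I * (t₁ + Complex.I)‖ ^ 2)) = μ / (μ + 1 + t₁ ^ 2) := by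
    intro t₁
    set A : ℝ := t₁ ^ 2 + 1 with hA
    have hApos : 0 < A := by positivity
    set p : ℝ := μ * t₁ / A with hp
    set c : ℝ := (μ + 1 + t₁ ^ 2) / A with hcdef
    have hcpos : 0 < c := by positivity
    have hpt : ∀ t₂ : ℝ, μ / (π * ‖(t₂ : ℂ) * (t₁ + Complex.I) + μ
        - Complex.I * (t₁ + Complex.I)‖ ^ 2)
        = (μ / (π * A)) * ((t₂ + p) ^ 2 + c ^ 2)⁻¹ := by
      intro t₂
      have habs : ‖(t₂ : ℂ) * (t₁ + Complex.I) + μ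
          - Complex.I * (t₁ + Complex.I)‖ ^ 2
          = A * ((t₂ + p) ^ 2 + c ^ 2) := by
        rw [Complex.sq_norm, Complex.normSq_apply]
        simp [hp, hcdef, hA]
        field_simp
        ring
      rw [habs]
      have hX : (0 : ℝ) < (t₂ + p) ^ 2 + c ^ 2 := by positivity
      have hπ : (0 : ℝ) < π := Real.pi_pos
      field_simp
    simp_rw [hpt]
    rw [MeasureTheory.integral_const_mul, aux_int_shift p c hcpos, hcdef]
    have hπ : (0 : ℝ) < π := Real.pi_pos
    rw [hA]
    field_simp

  simp_rw [key]
  have hbound : (∫ t₁ : ℝ, μ / (μ + 1 + t₁ ^ 2)) ≤ ∫ t₁ : ℝ, μ * (1 + t₁ ^ 2)⁻¹ := by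
    apply MeasureTheory.integral_mono_of_nonneg
    · filter_upwards with t₁; positivity
    · exact integrable_inv_one_add_sq.const_mul μ
    · filter_upwards with t₁
      rw [← div_eq_mul_inv]
      gcongr
      all_goals first | positivity | linarith
  calc (∫ t₁ : ℝ, μ / (μ + 1 + t₁ ^ 2)) ≤ ∫ t₁ : ℝ, μ * (1 + t₁ ^ 2)⁻¹ := hbound
    _ = μ * π := by rw [MeasureTheory.integral_const_mul, integral_univ_inv_one_add_sq]
    _ ≤ π * μ := by linarith
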